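/- Let n ≥ 3, let λ be a partition of n−2, let μ and ν be partitions of n−1 and ξ a partition of n, such that each of the diagrams of μ and ν is obtained from that of λ by adding one cell, and the diagram of ξ is obtained from each of the diagrams of μ and ν by adding one cell. Then the endomorphism a = i_{λν} ∘ i_{νξ} ∘ ρ_ξ((n−1 n)) ∘ i_{ξμ} ∘ i_{μλ} of W^λ commutes with ρ_λ(σ) for every permutation σ of {1,…,n} fixing both n−1 and n, and a is a scalar multiple of the identity of W^λ. -/

import Mathlib

noncomputable section

namespace WLE

/-- A filling (bijective labelling of the cells of `μ` by `Fin μ.card`) is *standard* if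
its entries increase strictly along rows and columns. -/
def IsStandard (μ : YoungDiagram) (f : {c : ℕ × ℕ // c ∈ μ.cells} ≃ Fin μ.card) : Prop :=
  ∀ c c' : {c : ℕ × ℕ // c ∈ μ.cells},
    ((c.1.1 = c'.1.1 ∧ c.1.2 < c'.1.2) ∨ (c.1.2 = c'.1.2 ∧ c.1.1 < c'.1.1)) →
      f c < f c'

/-- A standard Young tableau of shape `μ`: a bijection from the cells of `μ` to
`Fin μ.card` (0-indexed entries; the paper's entry `k ∈ {1,…,n}` corresponds to the
value `k − 1 : Fin μ.card`) increasing along rows and columns. -/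
def SYT (μ : YoungDiagram) : Type :=
  {f : {c : ℕ × ℕ // c ∈ μ.cells} ≃ Fin μ.card // IsStandard μ f}

instance (μ : YoungDiagram) : Finite (SYT μ) := by
  have : Finite ({c : ℕ × ℕ // c ∈ μ.cells} ≃ Fin μ.card) :=
    Finite.of_injective (fun f => (f : {c : ℕ × ℕ // c ∈ μ.cells} → Fin μ.card))
      fun f g h => Equiv.coe_fn_injective h
  exact Subtype.finite

noncomputable instance (μ : YoungDiagram) : Fintype (SYT μ) := Fintype.ofFinite _

noncomputable instance (μ : YoungDiagram) : DecidableEq (SYT μ) := Classical.decEq _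

/-- `content T k` is the content `j − i` of the cell (row `i`, column `j`, 0-indexed)
of `T` containing the entry `k`. -/
def content {μ : YoungDiagram} (T : SYT μ) (k : Fin μ.card) : ℤ :=
  ((T.1.symm k).1.2 : ℤ) - ((T.1.symm k).1.1 : ℤ)

/-- The index `k − 1` (in `Fin μ.card`), used to form the adjacent transposition
`(k−1 k)`. -/
def kpred {μ : YoungDiagram} (k : Fin μ.card) : Fin μ.card :=
  ⟨k.val - 1, lt_of_le_of_lt (Nat.sub_le _ _) k.isLt⟩

/-- The filling obtained from `T` by exchanging the entries `k−1` and `k`. -/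
def swapped {μ : YoungDiagram} (k : Fin μ.card) (T : SYT μ) :
    {c : ℕ × ℕ // c ∈ μ.cells} ≃ Fin μ.card :=
  T.1.trans (Equiv.swap (kpred k) k)

/-- The (real) axial distance `d = c_T(k) − c_T(k−1)`. -/
def dval {μ : YoungDiagram} (k : Fin μ.card) (T : SYT μ) : ℝ :=
  ((content T k - content T (kpred k) : ℤ) : ℝ)

noncomputable instance (μ : YoungDiagram) : DecidablePred (IsStandard μ) :=
  fun _ => Classical.propDecidable _

/-- The Young orthogonal form operator `s_k` on `W^μ = EuclideanSpace ℝ (SYT μ)`: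
`s_k e_T = (1/d) e_T + √(1 − 1/d²) e_{(k−1 k)T}`, with `d = c_T(k) − c_T(k−1)` and
`e_{(k−1 k)T} = 0` when the swapped filling is not standard. -/
def youngOp (μ : YoungDiagram) (k : Fin μ.card) :
    EuclideanSpace ℝ (SYT μ) →ₗ[ℝ] EuclideanSpace ℝ (SYT μ) where
  toFun x := WithLp.toLp 2 fun T => (dval k T)⁻¹ * x T +
    Real.sqrt (1 - ((dval k T)⁻¹) ^ 2) *
      (if h : IsStandard μ (swapped k T) then x ⟨swapped k T, h⟩ else 0)
  map_add' x y := by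
    ext T
    by_cases h : IsStandard μ (swapped k T) <;>
      simp [h, PiLp.add_apply, -WithLp.ofLp_add] <;> (try erw [PiLp.add_apply]) <;> ring
  map_smul' c x := by
    ext T
    by_cases h : IsStandard μ (swapped k T) <;>
      simp [h, PiLp.smul_apply, smul_eq_mul, -WithLp.ofLp_smul] <;> (try erw [PiLp.smul_apply, smul_eq_mul]) <;> ring

end WLE

namespace WLE

open scoped RealInnerProductSpace
theorem SYT_ext {μ : YoungDiagram} {T T' : SYT μ}
    (h : ∀ c (hc : c ∈ μ.cells),
      ((T.1 ⟨c, hc⟩ : Fin μ.card) : ℕ) = ((T'.1 ⟨c, hc⟩ : Fin μ.card) : ℕ)) :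
    T = T' :=
  Subtype.ext (Equiv.ext fun ⟨c, hc⟩ => Fin.ext (h c hc))

/-- In an extension of a standard filling by one cell, the new cell gets the top value. -/
theorem top_value {lam mu : YoungDiagram} (hsub : lam.cells ⊆ mu.cells)
    (hcard : mu.card = lam.card + 1)
    (E : {c : ℕ × ℕ // c ∈ mu.cells} ≃ Fin mu.card)
    (T : {c : ℕ × ℕ // c ∈ lam.cells} ≃ Fin lam.card)
    (hagree : ∀ c (hc : c ∈ lam.cells),
      ((E ⟨c, hsub hc⟩ : Fin mu.card) : ℕ) = ((T ⟨c, hc⟩ : Fin lam.card) : ℕ))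
    {c : ℕ × ℕ} (hc : c ∈ mu.cells) (hcl : c ∉ lam.cells) :
    ((E ⟨c, hc⟩ : Fin mu.card) : ℕ) = lam.card := by
  by_contra hne
  have hlt : ((E ⟨c, hc⟩ : Fin mu.card) : ℕ) < lam.card := by
    have := (E ⟨c, hc⟩).isLt; omega
  set c' := T.symm ⟨_, hlt⟩ with hc'
  have h1 := hagree c'.1 c'.2
  have h2 : T ⟨c'.1, c'.2⟩ = ⟨_, hlt⟩ := by rw [hc']; simp
  rw [h2] at h1
  have h4 := E.injective (Fin.ext h1)
  have : c'.1 = c := congrArg Subtype.val h4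
  exact hcl (this ▸ c'.2)

theorem new_cell {s t : Finset (ℕ × ℕ)} (h : s ⊆ t) (hc : t.card = s.card + 1) :
    ∃ c, t \ s = {c} := by
  rw [← Finset.card_eq_one, Finset.card_sdiff_of_subset h]; omega
/-- Let `n ≥ 3`, let `λ` be a partition of `n−2`, let `μ` and `ν` be
partitions of `n−1` obtained from `λ` by adding one cell, and `ξ` a partition of `n`
obtained from each of `μ` and `ν` by adding one cell.  Then the endomorphism
`a = i_{λν} ∘ i_{νξ} ∘ ρ_ξ((n−1 n)) ∘ i_{ξμ} ∘ i_{μλ}` of `W^λ` commutes with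
`ρ_λ(σ)` for every permutation `σ` of `{1,…,n}` fixing `n−1` and `n` (identified
with an element of `S_{n−2}`, i.e. with `ρ_λ(τ)` for every `τ ∈ S_{n−2}`), and `a`
is a scalar multiple of the identity of `W^λ`. -/
theorem composite_commutes_and_is_scalar (lam mu nu xi : YoungDiagram) (hn : 3 ≤ xi.card)
    (hsub1 : lam.cells ⊆ mu.cells) (hcard1 : mu.card = lam.card + 1)
    (hsub1' : lam.cells ⊆ nu.cells) (hcard1' : nu.card = lam.card + 1)
    (hsub2 : mu.cells ⊆ xi.cells) (hcard2 : xi.card = mu.card + 1)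
    (hsub2' : nu.cells ⊆ xi.cells) (hcard2' : xi.card = nu.card + 1)
    (ext1 : SYT lam → SYT mu)
    (hext1 : ∀ (T : SYT lam) (c : ℕ × ℕ) (hc : c ∈ lam.cells),
      (((ext1 T).1 ⟨c, hsub1 hc⟩ : Fin mu.card) : ℕ) = ((T.1 ⟨c, hc⟩ : Fin lam.card) : ℕ))
    (ext2 : SYT mu → SYT xi)
    (hext2 : ∀ (T : SYT mu) (c : ℕ × ℕ) (hc : c ∈ mu.cells),
      (((ext2 T).1 ⟨c, hsub2 hc⟩ : Fin xi.card) : ℕ) = ((T.1 ⟨c, hc⟩ : Fin mu.card) : ℕ))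
    (ext1' : SYT lam → SYT nu)
    (hext1' : ∀ (T : SYT lam) (c : ℕ × ℕ) (hc : c ∈ lam.cells),
      (((ext1' T).1 ⟨c, hsub1' hc⟩ : Fin nu.card) : ℕ) = ((T.1 ⟨c, hc⟩ : Fin lam.card) : ℕ))
    (ext2' : SYT nu → SYT xi)
    (hext2' : ∀ (T : SYT nu) (c : ℕ × ℕ) (hc : c ∈ nu.cells),
      (((ext2' T).1 ⟨c, hsub2' hc⟩ : Fin xi.card) : ℕ) = ((T.1 ⟨c, hc⟩ : Fin nu.card) : ℕ))
    (i1 : EuclideanSpace ℝ (SYT lam) →ₗ[ℝ] EuclideanSpace ℝ (SYT mu))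
    (hi1 : ∀ T : SYT lam,
      i1 (EuclideanSpace.single T (1 : ℝ)) = EuclideanSpace.single (ext1 T) (1 : ℝ))
    (i2 : EuclideanSpace ℝ (SYT mu) →ₗ[ℝ] EuclideanSpace ℝ (SYT xi))
    (hi2 : ∀ T : SYT mu,
      i2 (EuclideanSpace.single T (1 : ℝ)) = EuclideanSpace.single (ext2 T) (1 : ℝ))
    (i1' : EuclideanSpace ℝ (SYT lam) →ₗ[ℝ] EuclideanSpace ℝ (SYT nu))
    (hi1' : ∀ T : SYT lam,
      i1' (EuclideanSpace.single T (1 : ℝ)) = EuclideanSpace.single (ext1' T) (1 : ℝ))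
    (i2' : EuclideanSpace ℝ (SYT nu) →ₗ[ℝ] EuclideanSpace ℝ (SYT xi))
    (hi2' : ∀ T : SYT nu,
      i2' (EuclideanSpace.single T (1 : ℝ)) = EuclideanSpace.single (ext2' T) (1 : ℝ))
    (iadj1' : EuclideanSpace ℝ (SYT nu) →ₗ[ℝ] EuclideanSpace ℝ (SYT lam))
    (hadj1' : ∀ (x : EuclideanSpace ℝ (SYT nu)) (y : EuclideanSpace ℝ (SYT lam)),
      ⟪iadj1' x, y⟫ = ⟪x, i1' y⟫)
    (iadj2' : EuclideanSpace ℝ (SYT xi) →ₗ[ℝ] EuclideanSpace ℝ (SYT nu))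
    (hadj2' : ∀ (x : EuclideanSpace ℝ (SYT xi)) (y : EuclideanSpace ℝ (SYT nu)),
      ⟪iadj2' x, y⟫ = ⟪x, i2' y⟫)
    (ρxi : Equiv.Perm (Fin xi.card) →* (Module.End ℝ (EuclideanSpace ℝ (SYT xi)))ˣ)
    (hρxi : ∀ k : Fin xi.card, 1 ≤ k.val →
      ((ρxi (Equiv.swap (kpred k) k) : Module.End ℝ (EuclideanSpace ℝ (SYT xi)))) =
        youngOp xi k)
    (ρlam : Equiv.Perm (Fin lam.card) →* (Module.End ℝ (EuclideanSpace ℝ (SYT lam)))ˣ)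
    (hρlam : ∀ k : Fin lam.card, 1 ≤ k.val →
      ((ρlam (Equiv.swap (kpred k) k) : Module.End ℝ (EuclideanSpace ℝ (SYT lam)))) =
        youngOp lam k) :
    (∀ τ : Equiv.Perm (Fin lam.card),
      (iadj1' ∘ₗ iadj2' ∘ₗ
          ((ρxi (Equiv.swap (kpred (⟨xi.card - 1, by omega⟩ : Fin xi.card))
              (⟨xi.card - 1, by omega⟩ : Fin xi.card)) :
            Module.End ℝ (EuclideanSpace ℝ (SYT xi)))) ∘ₗ i2 ∘ₗ i1) ∘ₗ
          ((ρlam τ : Module.End ℝ (EuclideanSpace ℝ (SYT lam)))) =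
        ((ρlam τ : Module.End ℝ (EuclideanSpace ℝ (SYT lam)))) ∘ₗ
          (iadj1' ∘ₗ iadj2' ∘ₗ
            ((ρxi (Equiv.swap (kpred (⟨xi.card - 1, by omega⟩ : Fin xi.card))
                (⟨xi.card - 1, by omega⟩ : Fin xi.card)) :
              Module.End ℝ (EuclideanSpace ℝ (SYT xi)))) ∘ₗ i2 ∘ₗ i1)) ∧
    (∃ r : ℝ,
      iadj1' ∘ₗ iadj2' ∘ₗ
          ((ρxi (Equiv.swap (kpred (⟨xi.card - 1, by omega⟩ : Fin xi.card))
              (⟨xi.card - 1, by omega⟩ : Fin xi.card)) :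
            Module.End ℝ (EuclideanSpace ℝ (SYT xi)))) ∘ₗ i2 ∘ₗ i1 =
        r • (LinearMap.id : EuclideanSpace ℝ (SYT lam) →ₗ[ℝ] EuclideanSpace ℝ (SYT lam))) := by
  classical
  obtain ⟨cm, hcm⟩ := new_cell hsub1 hcard1
  obtain ⟨cn, hcn⟩ := new_cell hsub1' hcard1'
  obtain ⟨cxm, hcxm⟩ := new_cell hsub2 hcard2
  obtain ⟨cxn, hcxn⟩ := new_cell hsub2' hcard2'
  have hcm1 : cm ∈ mu.cells ∧ cm ∉ lam.cells :=
    Finset.mem_sdiff.1 (hcm ▸ Finset.mem_singleton_self cm)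
  have hcn1 : cn ∈ nu.cells ∧ cn ∉ lam.cells :=
    Finset.mem_sdiff.1 (hcn ▸ Finset.mem_singleton_self cn)
  have hcxm1 : cxm ∈ xi.cells ∧ cxm ∉ mu.cells :=
    Finset.mem_sdiff.1 (hcxm ▸ Finset.mem_singleton_self cxm)
  have hcxn1 : cxn ∈ xi.cells ∧ cxn ∉ nu.cells :=
    Finset.mem_sdiff.1 (hcxn ▸ Finset.mem_singleton_self cxn)
  set d : ℝ := ((((cxn.2 : ℤ) - (cxn.1 : ℤ)) - ((cn.2 : ℤ) - (cn.1 : ℤ)) : ℤ) : ℝ) with hd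
  have key : ∀ kk : Fin xi.card, kk.val = xi.card - 1 →
      iadj1' ∘ₗ iadj2' ∘ₗ
          ((ρxi (Equiv.swap (kpred kk) kk) : Module.End ℝ (EuclideanSpace ℝ (SYT xi)))) ∘ₗ
          i2 ∘ₗ i1 =
        (if mu = nu then d⁻¹ else Real.sqrt (1 - d⁻¹ ^ 2)) •
          (LinearMap.id : EuclideanSpace ℝ (SYT lam) →ₗ[ℝ] EuclideanSpace ℝ (SYT lam)) := by
    intro kk hkk
    have hkp : (kpred kk).val = xi.card - 2 := by
      simp only [kpred, hkk]
      omega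
    -- generic facts about Φ U := ext2' (ext1' U)
    have hΦlam : ∀ (U : SYT lam) c (hc : c ∈ lam.cells),
        (((ext2' (ext1' U)).1 ⟨c, hsub2' (hsub1' hc)⟩ : Fin xi.card) : ℕ) =
          ((U.1 ⟨c, hc⟩ : Fin lam.card) : ℕ) := by
      intro U c hc
      rw [hext2' (ext1' U) c (hsub1' hc), hext1' U c hc]
    have hΦn : ∀ U : SYT lam,
        (((ext2' (ext1' U)).1 ⟨cn, hsub2' hcn1.1⟩ : Fin xi.card) : ℕ) = xi.card - 2 := by
      intro U
      rw [hext2' (ext1' U) cn hcn1.1,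
        top_value hsub1' hcard1' (ext1' U).1 U.1 (hext1' U) hcn1.1 hcn1.2]
      omega
    have hΦxn : ∀ U : SYT lam,
        (((ext2' (ext1' U)).1 ⟨cxn, hcxn1.1⟩ : Fin xi.card) : ℕ) = xi.card - 1 := by
      intro U
      rw [top_value hsub2' hcard2' (ext2' (ext1' U)).1 (ext1' U).1 (hext2' (ext1' U))
        hcxn1.1 hcxn1.2]
      omega
    have hΦnf : ∀ U : SYT lam, (ext2' (ext1' U)).1 ⟨cn, hsub2' hcn1.1⟩ = kpred kk :=
      fun U => Fin.ext (by rw [hΦn U, hkp])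
    have hΦxnf : ∀ U : SYT lam, (ext2' (ext1' U)).1 ⟨cxn, hcxn1.1⟩ = kk :=
      fun U => Fin.ext (by rw [hΦxn U, hkk])
    -- generic facts about S U := ext2 (ext1 U)
    have hSlam : ∀ (U : SYT lam) c (hc : c ∈ lam.cells),
        (((ext2 (ext1 U)).1 ⟨c, hsub2 (hsub1 hc)⟩ : Fin xi.card) : ℕ) =
          ((U.1 ⟨c, hc⟩ : Fin lam.card) : ℕ) := by
      intro U c hc
      rw [hext2 (ext1 U) c (hsub1 hc), hext1 U c hc]
    have hSm : ∀ U : SYT lam,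
        (((ext2 (ext1 U)).1 ⟨cm, hsub2 hcm1.1⟩ : Fin xi.card) : ℕ) = xi.card - 2 := by
      intro U
      rw [hext2 (ext1 U) cm hcm1.1,
        top_value hsub1 hcard1 (ext1 U).1 U.1 (hext1 U) hcm1.1 hcm1.2]
      omega
    have hSxm : ∀ U : SYT lam,
        (((ext2 (ext1 U)).1 ⟨cxm, hcxm1.1⟩ : Fin xi.card) : ℕ) = xi.card - 1 := by
      intro U
      rw [top_value hsub2 hcard2 (ext2 (ext1 U)).1 (ext1 U).1 (hext2 (ext1 U))
        hcxm1.1 hcxm1.2]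
      omega
    -- cell decomposition of xi
    have hdec : ∀ c ∈ xi.cells, c ∈ lam.cells ∨ c = cn ∨ c = cxn := by
      intro c hc
      by_cases h1 : c ∈ lam.cells
      · exact Or.inl h1
      by_cases h2 : c ∈ nu.cells
      · exact Or.inr (Or.inl (Finset.mem_singleton.1 (hcn ▸ Finset.mem_sdiff.2 ⟨h2, h1⟩)))
      · exact Or.inr (Or.inr (Finset.mem_singleton.1 (hcxn ▸ Finset.mem_sdiff.2 ⟨hc, h2⟩)))
    have hEqv : ∀ (E F : {c : ℕ × ℕ // c ∈ xi.cells} ≃ Fin xi.card),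
        (∀ c (hc : c ∈ xi.cells),
          ((E ⟨c, hc⟩ : Fin xi.card) : ℕ) = ((F ⟨c, hc⟩ : Fin xi.card) : ℕ)) → E = F :=
      fun E F h => Equiv.ext fun ⟨c, hc⟩ => Fin.ext (h c hc)
    -- swapped values
    have hswlam : ∀ (U : SYT lam) c (hc : c ∈ lam.cells),
        ((swapped kk (ext2' (ext1' U)) ⟨c, hsub2' (hsub1' hc)⟩ : Fin xi.card) : ℕ) =
          ((U.1 ⟨c, hc⟩ : Fin lam.card) : ℕ) := by
      intro U c hc
      simp only [swapped, Equiv.trans_apply]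
      rw [Equiv.swap_apply_of_ne_of_ne, hΦlam U c hc]
      · intro h
        have h2 := congrArg Fin.val h
        rw [hΦlam U c hc, hkp] at h2
        have := (U.1 ⟨c, hc⟩).isLt; omega
      · intro h
        have h2 := congrArg Fin.val h
        rw [hΦlam U c hc, hkk] at h2
        have := (U.1 ⟨c, hc⟩).isLt; omega
    have hswn : ∀ U : SYT lam,
        ((swapped kk (ext2' (ext1' U)) ⟨cn, hsub2' hcn1.1⟩ : Fin xi.card) : ℕ) = xi.card - 1 := by
      intro U
      simp only [swapped, Equiv.trans_apply]
      rw [hΦnf U, Equiv.swap_apply_left, hkk]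
    have hswxn : ∀ U : SYT lam,
        ((swapped kk (ext2' (ext1' U)) ⟨cxn, hcxn1.1⟩ : Fin xi.card) : ℕ) = xi.card - 2 := by
      intro U
      simp only [swapped, Equiv.trans_apply]
      rw [hΦxnf U, Equiv.swap_apply_right, hkp]
    -- dval
    have hdval : ∀ U : SYT lam, dval kk (ext2' (ext1' U)) = d := by
      intro U
      have h1 : (ext2' (ext1' U)).1.symm kk = ⟨cxn, hcxn1.1⟩ :=
        (Equiv.symm_apply_eq _).2 (hΦxnf U).symm
      have h2 : (ext2' (ext1' U)).1.symm (kpred kk) = ⟨cn, hsub2' hcn1.1⟩ :=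
        (Equiv.symm_apply_eq _).2 (hΦnf U).symm
      simp only [dval, content, h1, h2, hd]
    -- adjoint evaluation
    have hA1 : ∀ (x : EuclideanSpace ℝ (SYT nu)) (U : SYT lam), iadj1' x U = x (ext1' U) := by
      intro x U
      have h1 : iadj1' x U = ⟪iadj1' x, EuclideanSpace.single U (1 : ℝ)⟫ := by
        rw [EuclideanSpace.inner_single_right]; simp
      rw [h1, hadj1', hi1', EuclideanSpace.inner_single_right]; simp
    have hA2 : ∀ (x : EuclideanSpace ℝ (SYT xi)) (U : SYT nu), iadj2' x U = x (ext2' U) := by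
      intro x U
      have h1 : iadj2' x U = ⟪iadj2' x, EuclideanSpace.single U (1 : ℝ)⟫ := by
        rw [EuclideanSpace.inner_single_right]; simp
      rw [h1, hadj2', hi2', EuclideanSpace.inner_single_right]; simp
    -- main case split
    by_cases hmn : mu = nu
    · -- identify cells
      have hcells : mu.cells = nu.cells := by rw [hmn]
      have hmeq : cm = cn := by
        have h1 : cm ∈ nu.cells \ lam.cells := Finset.mem_sdiff.2 ⟨hcells ▸ hcm1.1, hcm1.2⟩
        exact Finset.mem_singleton.1 (hcn ▸ h1)
      have hxeq : cxm = cxn := by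
        have h1 : cxm ∈ xi.cells \ nu.cells := Finset.mem_sdiff.2 ⟨hcxm1.1, by
          rw [← hcells]; exact hcxm1.2⟩
        exact Finset.mem_singleton.1 (hcxn ▸ h1)
      subst hmeq
      subst hxeq
      rw [if_pos hmn]
      apply Module.Basis.ext (EuclideanSpace.basisFun (SYT lam) ℝ).toBasis
      intro T
      rw [OrthonormalBasis.coe_toBasis, EuclideanSpace.basisFun_apply]
      simp only [LinearMap.comp_apply, LinearMap.smul_apply, LinearMap.id_apply]
      rw [hi1, hi2, hρxi kk (by omega)]
      ext T''
      rw [hA1, hA2]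
      simp only [youngOp, LinearMap.coe_mk, AddHom.coe_mk]
      -- second (swap) term is always zero
      have hBz : (if h : IsStandard xi (swapped kk (ext2' (ext1' T''))) then
          (EuclideanSpace.single (ext2 (ext1 T)) (1 : ℝ) : EuclideanSpace ℝ (SYT xi))
            ⟨swapped kk (ext2' (ext1' T'')), h⟩ else 0) = 0 := by
        split_ifs with h
        · erw [EuclideanSpace.single_apply, if_neg]
          intro heq
          have hval : ((swapped kk (ext2' (ext1' T'')) ⟨cm, hsub2 hcm1.1⟩ : Fin xi.card) : ℕ) =
              (((ext2 (ext1 T)).1 ⟨cm, hsub2 hcm1.1⟩ : Fin xi.card) : ℕ) := by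
            rw [show swapped kk (ext2' (ext1' T'')) = (ext2 (ext1 T)).1 from
              congrArg Subtype.val heq]
          rw [hswn T'', hSm T] at hval
          omega
        · rfl
      rw [hBz, mul_zero, add_zero]
      by_cases hTT : T'' = T
      · subst hTT
        have hΦS : ext2' (ext1' T'') = ext2 (ext1 T'') := by
          apply Subtype.ext
          apply hEqv
          intro c hc
          rcases hdec c hc with h1 | h1 | h1
          · rw [hΦlam T'' c h1, hSlam T'' c h1]
          · subst h1; rw [hΦn T'', hSm T'']
          · subst h1; rw [hΦxn T'', hSxm T'']
        rw [EuclideanSpace.single_apply, if_pos hΦS, hdval T'']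
        simp [EuclideanSpace.single_apply]
      · have hne : ext2' (ext1' T'') ≠ ext2 (ext1 T) := by
          intro h
          apply hTT
          apply SYT_ext
          intro c hc
          have h1 := hΦlam T'' c hc
          have h2 := hSlam T c hc
          have h3 : (((ext2' (ext1' T'')).1 ⟨c, hsub2' (hsub1' hc)⟩ : Fin xi.card) : ℕ) =
              (((ext2 (ext1 T)).1 ⟨c, hsub2 (hsub1 hc)⟩ : Fin xi.card) : ℕ) := by rw [h]
          omega
        rw [EuclideanSpace.single_apply, if_neg hne]
        simp [EuclideanSpace.single_apply, hTT]
    · -- mu ≠ nu : identify cm = cxn and cn = cxm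
      have hmucells : mu.cells = lam.cells ∪ {cm} := by
        rw [← hcm, Finset.union_comm, Finset.sdiff_union_of_subset hsub1]
      have hnucells : nu.cells = lam.cells ∪ {cn} := by
        rw [← hcn, Finset.union_comm, Finset.sdiff_union_of_subset hsub1']
      have hcmcn : cm ≠ cn := by
        intro h
        apply hmn
        have : mu.cells = nu.cells := by rw [hmucells, hnucells, h]
        ext c
        rw [this]
      have hcmx : cm = cxn := by
        have h1 : cm ∉ nu.cells := by
          intro h
          exact hcmcn (Finset.mem_singleton.1 (hcn ▸ Finset.mem_sdiff.2 ⟨h, hcm1.2⟩))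
        exact Finset.mem_singleton.1
          (hcxn ▸ Finset.mem_sdiff.2 ⟨hsub2 hcm1.1, h1⟩)
      have hcnx : cn = cxm := by
        have h1 : cn ∉ mu.cells := by
          intro h
          exact hcmcn (Finset.mem_singleton.1 (hcm ▸ Finset.mem_sdiff.2 ⟨h, hcn1.2⟩)).symm
        exact Finset.mem_singleton.1
          (hcxm ▸ Finset.mem_sdiff.2 ⟨hsub2' hcn1.1, h1⟩)
      subst hcmx
      subst hcnx
      rw [if_neg hmn]
      apply Module.Basis.ext (EuclideanSpace.basisFun (SYT lam) ℝ).toBasis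
      intro T
      rw [OrthonormalBasis.coe_toBasis, EuclideanSpace.basisFun_apply]
      simp only [LinearMap.comp_apply, LinearMap.smul_apply, LinearMap.id_apply]
      rw [hi1, hi2, hρxi kk (by omega)]
      ext T''
      rw [hA1, hA2]
      simp only [youngOp, LinearMap.coe_mk, AddHom.coe_mk]
      -- first term is always zero
      have hAz : (EuclideanSpace.single (ext2 (ext1 T)) (1 : ℝ) : EuclideanSpace ℝ (SYT xi))
          (ext2' (ext1' T'')) = 0 := by
        rw [EuclideanSpace.single_apply, if_neg]
        intro heq
        have hval : (((ext2' (ext1' T'')).1 ⟨cm, hsub2 hcm1.1⟩ : Fin xi.card) : ℕ) =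
            (((ext2 (ext1 T)).1 ⟨cm, hsub2 hcm1.1⟩ : Fin xi.card) : ℕ) := by rw [heq]
        rw [hΦxn T'', hSm T] at hval
        omega
      rw [hAz, mul_zero, zero_add]
      by_cases hTT : T'' = T
      · subst hTT
        have hsw : swapped kk (ext2' (ext1' T'')) = (ext2 (ext1 T'')).1 := by
          apply hEqv
          intro c hc
          rcases hdec c hc with h1 | h1 | h1
          · rw [hswlam T'' c h1, hSlam T'' c h1]
          · subst h1; rw [hswn T'', hSxm T'']
          · subst h1; rw [hswxn T'', hSm T'']
        have hstd : IsStandard xi (swapped kk (ext2' (ext1' T''))) := by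
          rw [hsw]; exact (ext2 (ext1 T'')).2
        erw [dif_pos hstd, EuclideanSpace.single_apply, if_pos (Subtype.ext hsw),
          hdval T'']
        simp [EuclideanSpace.single_apply]
      · have hBz : (if h : IsStandard xi (swapped kk (ext2' (ext1' T''))) then
            (EuclideanSpace.single (ext2 (ext1 T)) (1 : ℝ) : EuclideanSpace ℝ (SYT xi))
              ⟨swapped kk (ext2' (ext1' T'')), h⟩ else 0) = 0 := by
          split_ifs with h
          · erw [EuclideanSpace.single_apply, if_neg]
            intro heq
            apply hTT
            apply SYT_ext
            intro c hc
            have h1 := hswlam T'' c hc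
            have h2 := hSlam T c hc
            have h3 : ((swapped kk (ext2' (ext1' T'')) ⟨c, hsub2' (hsub1' hc)⟩ : Fin xi.card) : ℕ) =
                (((ext2 (ext1 T)).1 ⟨c, hsub2 (hsub1 hc)⟩ : Fin xi.card) : ℕ) := by
              rw [show swapped kk (ext2' (ext1' T'')) = (ext2 (ext1 T)).1 from
                congrArg Subtype.val heq]
            omega
          · rfl
        rw [hBz, mul_zero]
        simp [EuclideanSpace.single_apply, hTT]
  constructor
  · intro τ
    rw [key ⟨xi.card - 1, by omega⟩ rfl, LinearMap.smul_comp, LinearMap.comp_smul,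
      LinearMap.id_comp, LinearMap.comp_id]
  · exact ⟨_, key ⟨xi.card - 1, by omega⟩ rfl⟩

end WLE
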